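/- Let D be a directed acyclic graph with s, t ∈ V(D), and let G be the directed bipartite graph with vertex set {v_L, v_R : v ∈ V(D)} and edges u_L→v_R and u_R→v_L for each edge u→v of D. If X ⊆ E(G) is a set of edges such that every directed s_L→t_R path in G uses an edge of X, then the set F := {uv ∈ E(D) : u_L v_R ∈ X or u_R v_L ∈ X} intersects every odd-length directed s→t path in D. -/

import Mathlib

/-- A (simple) directed path in the directed graph `G`, represented as a nonempty
list of pairwise distinct vertices in which every consecutive pair is an edge of `G`. -/
def IsPath {V : Type*} (G : V → V → Prop) (p : List V) : Prop :=
  p ≠ [] ∧ p.Chain' G ∧ p.Nodup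

/-- `p` is a directed path from `u` to `v` in `G`. -/
def IsPathFrom {V : Type*} (G : V → V → Prop) (u v : V) (p : List V) : Prop :=
  IsPath G p ∧ p.head? = some u ∧ p.getLast? = some v

/-- The length (number of edges) of a path, given as its list of vertices. -/
def pathLen {V : Type*} (p : List V) : ℕ := p.length - 1

/-- The list of directed edges traversed by a path. -/
def edgesOf {V : Type*} (p : List V) : List (V × V) := p.zip p.tail

/-- A directed graph is acyclic (a DAG) if no vertex lies on a directed cycle. -/
def Acyclic {V : Type*} (G : V → V → Prop) : Prop :=
  ∀ v, ¬ Relation.TransGen G v v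

/-- The graph obtained from `G` by deleting the vertex set `M`. -/
def delV {V : Type*} (G : V → V → Prop) (M : Set V) : V → V → Prop :=
  fun a b => G a b ∧ a ∉ M ∧ b ∉ M

/-- The bipartite double cover of a directed graph `D`: vertices `Sum.inl v`
(playing the role of `v_L`) and `Sum.inr v` (playing the role of `v_R`), with
edges `u_L → v_R` and `u_R → v_L` for every edge `u → v` of `D`. -/
def biparLift {V : Type*} (D : V → V → Prop) : V ⊕ V → V ⊕ V → Prop
  | Sum.inl u, Sum.inr v => D u v
  | Sum.inr u, Sum.inl v => D u v
  | _, _ => False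


def tagV {V : Type*} (b : Bool) (v : V) : V ⊕ V := if b then Sum.inr v else Sum.inl v

def altL {V : Type*} : Bool → List V → List (V ⊕ V)
  | _, [] => []
  | b, v :: l => tagV b v :: altL (!b) l

lemma altL_map {V : Type*} (b : Bool) (l : List V) :
    (altL b l).map (Sum.elim id id) = l := by
  induction l generalizing b with
  | nil => rfl
  | cons a l ih => cases b <;> simp [altL, tagV, ih]

lemma altL_chain' {V : Type*} {D : V → V → Prop} {l : List V} (h : l.Chain' D) (b : Bool) :
    (altL b l).Chain' (biparLift D) := by
  induction l generalizing b with
  | nil => exact List.isChain_nil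
  | cons a l ih =>
    cases l with
    | nil => exact List.isChain_singleton _
    | cons c l =>
      rw [List.Chain', List.isChain_cons_cons] at h
      refine List.isChain_cons_cons.2 ⟨?_, ih h.2 (!b)⟩
      cases b <;> simpa [altL, tagV, biparLift] using h.1

lemma altL_concat {V : Type*} (b : Bool) (l : List V) (x : V) :
    altL b (l ++ [x]) = altL b l ++ [tagV (b ^^ decide (l.length % 2 = 1)) x] := by
  induction l generalizing b with
  | nil => simp [altL]
  | cons a l ih =>
    rcases Nat.mod_two_eq_zero_or_one l.length with h | h <;> cases b <;>
      simp [List.cons_append, altL, ih, h, Nat.succ_mod_two_eq_one_iff]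


/-- **(Feasibility of the projected cut, Claim 3.4.)**
Let `D` be a DAG with `s, t ∈ V(D)` and let `G = biparLift D` be its bipartite
double cover.  If `X ⊆ E(G)` is such that every directed `s_L → t_R` path of
`G` uses an edge of `X`, then
`F = {uv ∈ E(D) : u_L v_R ∈ X or u_R v_L ∈ X}` intersects every odd-length
directed `s → t` path of `D`. -/
theorem projected_cut_blocks_odd_paths {V : Type*} (D : V → V → Prop)
    (hD : Acyclic D) (s t : V) (X : Set ((V ⊕ V) × (V ⊕ V)))
    (hXE : ∀ e ∈ X, biparLift D e.1 e.2)
    (hX : ∀ q, IsPathFrom (biparLift D) (Sum.inl s) (Sum.inr t) q →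
      ∃ e ∈ edgesOf q, e ∈ X) :
    ∀ p, IsPathFrom D s t p → Odd (pathLen p) →
      ∃ e ∈ edgesOf p, e ∈ {e : V × V | D e.1 e.2 ∧
        ((Sum.inl e.1, Sum.inr e.2) ∈ X ∨ (Sum.inr e.1, Sum.inl e.2) ∈ X)} := by
  intro p hp hodd
  obtain ⟨⟨hne, hchain, hnd⟩, hhead, hlast⟩ := hp
  set f : V ⊕ V → V := Sum.elim id id with hf
  set q := altL false p with hq
  have hqmap : q.map f = p := altL_map _ _
  have hqpath : IsPathFrom (biparLift D) (Sum.inl s) (Sum.inr t) q := by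
    refine ⟨⟨?_, altL_chain' hchain false, List.Nodup.of_map f (hqmap ▸ hnd)⟩, ?_, ?_⟩
    · intro h
      apply hne
      rw [← hqmap, h, List.map_nil]
    · cases p with
      | nil => exact absurd rfl hne
      | cons a l =>
        have : a = s := by simpa using hhead
        simp [hq, altL, tagV, this]
    · have hlt : p.getLast hne = t := by
        rw [List.getLast?_eq_getLast hne, Option.some_inj] at hlast
        exact hlast
      have hparity : p.dropLast.length % 2 = 1 := by
        have : p.dropLast.length = pathLen p := by simp [pathLen]
        rw [this, Nat.odd_iff.1 hodd]
      have hdec : q = altL false p.dropLast ++ [Sum.inr t] := by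
        conv_lhs => rw [hq, ← List.dropLast_append_getLast hne]
        rw [altL_concat, hlt, hparity]
        rfl
      rw [hdec, List.getLast?_concat]
  obtain ⟨e, hem, heX⟩ := hX q hqpath
  have hbl := hXE e heX
  have hemp : (Prod.map f f) e ∈ edgesOf p := by
    have : edgesOf p = (edgesOf q).map (Prod.map f f) := by
      rw [← hqmap]
      unfold edgesOf
      rw [← List.map_tail, List.zip_map]
    rw [this]
    exact List.mem_map_of_mem hem
  obtain ⟨a, b⟩ := e
  cases a with
  | inl u =>
    cases b with
    | inl v => exact absurd hbl (by simp [biparLift])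
    | inr v => exact ⟨(u, v), by simpa [hf] using hemp, hbl, Or.inl heX⟩
  | inr u =>
    cases b with
    | inl v => exact ⟨(u, v), by simpa [hf] using hemp, hbl, Or.inr heX⟩
    | inr v => exact absurd hbl (by simp [biparLift])
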